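/- Key differential identity in the uniqueness proof: with (θ,u) and (θ̃,ũ) two solutions of the mean field game system as above, and writing u = u(0,t), ū = u(1,t) (similarly for ũ), one has d/dt[(θ-θ̃)(u-ũ) + ((1-θ)-(1-θ̃))(ū-ũ̄)] = θ(-h(ū-u,θ,0) + h(ũ̄-ũ,θ̃,0) + [(ū-ũ̄)-(u-ũ)]α*(ū-u,θ,0)) + θ̃(h(ū-u,θ,0) - h(ũ̄-ũ,θ̃,0) + [-(ū-ũ̄)+(u-ũ)]α*(ũ̄-ũ,θ̃,0)) + (1-θ)(-h(u-ū,θ,1) + h(ũ-ũ̄,θ̃,1) + [(u-ũ)-(ū-ũ̄)]α*(u-ū,θ,1)) + (1-θ̃)(h(u-ū,θ,1) - h(ũ-ũ̄,θ̃,1) + [-(u-ũ)+(ū-ũ̄)]α*(ũ-ũ̄,θ̃,1)). -/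

import Mathlib

open Set

/-- Key differential identity in the uniqueness proof: with
`(θ,u)` and `(θ̃,ũ)` two solutions of the mean field game system (writing
`u = u(0,·)`, `ū = u(1,·)` and similarly for the tilde solution), the quantity
`(θ-θ̃)(u-ũ) + ((1-θ)-(1-θ̃))(ū-ũ̄)` has the stated derivative. -/
theorem mfg_uniqueness_differential_identity
    (h αs : ℝ → ℝ → Fin 2 → ℝ)
    (θ θt u ub ut ubt : ℝ → ℝ) (t : ℝ)
    (hu : HasDerivAt u (-h (ub t - u t) (θ t) 0) t)
    (hub : HasDerivAt ub (-h (u t - ub t) (θ t) 1) t)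
    (hut : HasDerivAt ut (-h (ubt t - ut t) (θt t) 0) t)
    (hubt : HasDerivAt ubt (-h (ut t - ubt t) (θt t) 1) t)
    (hθ : HasDerivAt θ
      ((1 - θ t) * αs (u t - ub t) (θ t) 1 - θ t * αs (ub t - u t) (θ t) 0) t)
    (hθt : HasDerivAt θt
      ((1 - θt t) * αs (ut t - ubt t) (θt t) 1
        - θt t * αs (ubt t - ut t) (θt t) 0) t) :
    HasDerivAt (fun s =>
        (θ s - θt s) * (u s - ut s) + ((1 - θ s) - (1 - θt s)) * (ub s - ubt s))
      (θ t * (-h (ub t - u t) (θ t) 0 + h (ubt t - ut t) (θt t) 0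
          + ((ub t - ubt t) - (u t - ut t)) * αs (ub t - u t) (θ t) 0)
        + θt t * (h (ub t - u t) (θ t) 0 - h (ubt t - ut t) (θt t) 0
          + (-(ub t - ubt t) + (u t - ut t)) * αs (ubt t - ut t) (θt t) 0)
        + (1 - θ t) * (-h (u t - ub t) (θ t) 1 + h (ut t - ubt t) (θt t) 1
          + ((u t - ut t) - (ub t - ubt t)) * αs (u t - ub t) (θ t) 1)
        + (1 - θt t) * (h (u t - ub t) (θ t) 1 - h (ut t - ubt t) (θt t) 1
          + (-(u t - ut t) + (ub t - ubt t)) * αs (ut t - ubt t) (θt t) 1)) t := by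
  have H := ((hθ.sub hθt).mul (hu.sub hut)).add ((hθt.sub hθ).mul (hub.sub hubt))
  have heq : (fun s => (θ s - θt s) * (u s - ut s) + ((1 - θ s) - (1 - θt s)) * (ub s - ubt s))
      = fun s => (θ s - θt s) * (u s - ut s) + (θt s - θ s) * (ub s - ubt s) := by
    funext s; ring
  rw [heq]
  convert H using 1 <;> first | rfl | (simp only [Pi.sub_apply]; ring)
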